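/- Let A ∈ ℝ^{n×n}, u ∈ ℝ^n, and let Ã ∈ ℝ^{(n+1)×(n+1)} be the augmented matrix with upper-left block A, last column whose first n entries are u, and zero last row; let x̃₀ = e_{n+1} ∈ ℝ^{n+1} and let P = [I_n 0] ∈ ℝ^{n×(n+1)} be the projection onto the first n coordinates. Let δ ≥ 0, Ṽ ∈ ℝ^{(n+1)×ξ}, H̃ ∈ ℝ^{ξ×ξ}, and ε̃ ≥ 0 satisfy ‖exp(Ã δ) x̃₀ − Ṽ exp(H̃ δ) e₁‖ ≤ ε̃ δ. Then for every component i, |((∫_0^δ exp(A s) ds) u − P Ṽ exp(H̃ δ) e₁)_i| ≤ ε̃ δ; i.e., the constant-input particular solution ∫_0^δ exp(A s) ds · u lies in P Ṽ exp(H̃ δ) e₁ + { y ∈ ℝ^n : |y_i| ≤ ε̃ δ for all i }. -/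

import Mathlib

open Matrix

/-- Matrix exponential of a real square matrix. -/
noncomputable def mexp {m : ℕ} (A : Matrix (Fin m) (Fin m) ℝ) : Matrix (Fin m) (Fin m) ℝ :=
  NormedSpace.exp A

/-- Euclidean norm of a vector in `ℝ^m`. -/
noncomputable def enorm2 {m : ℕ} (x : Fin m → ℝ) : ℝ :=
  ‖(show EuclideanSpace ℝ (Fin m) from WithLp.toLp 2 x)‖

/-- First standard basis vector of `ℝ^ξ`. -/
noncomputable def e1 {ξ : ℕ} [NeZero ξ] : Fin ξ → ℝ := Pi.single 0 1

/-- The augmented matrix `Ã = [[A, u], [0, 0]]`. -/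
def aug {n : ℕ} (A : Matrix (Fin n) (Fin n) ℝ) (u : Fin n → ℝ) :
    Matrix (Fin (n + 1)) (Fin (n + 1)) ℝ :=
  Matrix.of fun i j =>
    Fin.lastCases 0 (fun i' => Fin.lastCases (u i') (fun j' => A i' j') j) i

/-- The entrywise integral `∫_0^t exp(A s) ds`. -/
noncomputable def intExp {n : ℕ} (A : Matrix (Fin n) (Fin n) ℝ) (t : ℝ) :
    Matrix (Fin n) (Fin n) ℝ :=
  Matrix.of fun i j => ∫ s in (0 : ℝ)..t, mexp (s • A) i j

/-- Projection `P = [I 0]` onto the first `n` coordinates. -/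
def proj {n : ℕ} (x : Fin (n + 1) → ℝ) : Fin n → ℝ := fun i => x i.castSucc

section Aux
attribute [local instance] Matrix.linftyOpNormedRing Matrix.linftyOpNormedAlgebra
variable {m : ℕ}

/-- The entry map of a matrix, as a continuous linear map. -/
noncomputable def entryCLM (i j : Fin m) : Matrix (Fin m) (Fin m) ℝ →L[ℝ] ℝ :=
  LinearMap.toContinuousLinearMap
    { toFun := fun M => M i j
      map_add' := fun _ _ => rfl
      map_smul' := fun _ _ => rfl }

lemma hasDerivAt_mexp_entry (B : Matrix (Fin m) (Fin m) ℝ) (i j : Fin m) (t : ℝ) :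
    HasDerivAt (fun t : ℝ => mexp (t • B) i j) ((mexp (t • B) * B) i j) t := by
  have h := hasDerivAt_exp_smul_const (𝕂 := ℝ) B t
  have h2 := (entryCLM i j).hasFDerivAt.comp_hasDerivAt t h
  exact h2

lemma hasDerivAt_mexp_entry' (B : Matrix (Fin m) (Fin m) ℝ) (i j : Fin m) (t : ℝ) :
    HasDerivAt (fun t : ℝ => mexp (t • B) i j) ((B * mexp (t • B)) i j) t := by
  have h := hasDerivAt_exp_smul_const' (𝕂 := ℝ) B t
  have h2 := (entryCLM i j).hasFDerivAt.comp_hasDerivAt t h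
  exact h2

lemma mexp_mul_mexp_neg (B : Matrix (Fin m) (Fin m) ℝ) :
    mexp B * mexp (-B) = 1 := by
  have h := (Matrix.exp_add_of_commute B (-B) (Commute.neg_right (Commute.refl B))).symm
  simp only [add_neg_cancel] at h
  simpa [mexp] using h
end Aux

lemma cont_mexp_entry {m : ℕ} (B : Matrix (Fin m) (Fin m) ℝ) (i j : Fin m) :
    Continuous (fun s : ℝ => mexp (s • B) i j) :=
  continuous_iff_continuousAt.2 fun t => (hasDerivAt_mexp_entry B i j t).continuousAt

lemma mexp_zero {m : ℕ} : mexp (0 : Matrix (Fin m) (Fin m) ℝ) = 1 := by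
  simp [mexp, NormedSpace.exp_zero (𝔸 := Matrix (Fin m) (Fin m) ℝ)]

lemma mul_intExp_add_one {m : ℕ} (A : Matrix (Fin m) (Fin m) ℝ) (t : ℝ) :
    A * intExp A t + 1 = mexp (t • A) := by
  ext i j
  have hder : ∀ s : ℝ, HasDerivAt (fun s : ℝ => mexp (s • A) i j) ((A * mexp (s • A)) i j) s :=
    fun s => hasDerivAt_mexp_entry' A i j s
  have hcont : Continuous fun s : ℝ => (A * mexp (s • A)) i j := by
    simp only [Matrix.mul_apply]
    exact continuous_finset_sum _ fun k _ => continuous_const.mul (cont_mexp_entry A k j)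
  have hint := intervalIntegral.integral_eq_sub_of_hasDerivAt
    (f := fun s : ℝ => mexp (s • A) i j) (a := 0) (b := t)
    (fun s _ => hder s) (hcont.intervalIntegrable 0 t)
  have hleft : (A * intExp A t) i j = ∫ s in (0:ℝ)..t, (A * mexp (s • A)) i j := by
    simp only [Matrix.mul_apply, intExp, Matrix.of_apply]
    rw [intervalIntegral.integral_finset_sum]
    · exact Finset.sum_congr rfl fun k _ => (intervalIntegral.integral_const_mul _ _).symm
    · exact fun k _ => (continuous_const.mul (cont_mexp_entry A k j)).intervalIntegrable 0 t
  have h0 : mexp ((0:ℝ) • A) i j = (1 : Matrix (Fin m) (Fin m) ℝ) i j := by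
    rw [zero_smul, mexp_zero]
  simp only [Matrix.add_apply, hleft, hint, h0]
  ring

lemma aug_last {n : ℕ} (A : Matrix (Fin n) (Fin n) ℝ) (u : Fin n → ℝ) (j : Fin (n + 1)) :
    aug A u (Fin.last n) j = 0 := by
  simp [aug]

lemma aug_castSucc_castSucc {n : ℕ} (A : Matrix (Fin n) (Fin n) ℝ) (u : Fin n → ℝ)
    (i j : Fin n) : aug A u i.castSucc j.castSucc = A i j := by
  simp [aug]

lemma aug_castSucc_last {n : ℕ} (A : Matrix (Fin n) (Fin n) ℝ) (u : Fin n → ℝ)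
    (i : Fin n) : aug A u i.castSucc (Fin.last n) = u i := by
  simp [aug]

/-- The key identity: `exp(t Atg) e_{n+1} = (∫₀ᵗ exp(A s) ds · u, 1)`. -/
lemma key {n : ℕ} (A : Matrix (Fin n) (Fin n) ℝ) (u : Fin n → ℝ) (t : ℝ) :
    mexp (t • aug A u) *ᵥ Pi.single (Fin.last n) 1
      = Fin.snoc (intExp A t *ᵥ u) 1 := by
  set Atg := aug A u with hAtg
  set g : ℝ → Fin (n + 1) → ℝ := fun t => Fin.snoc (intExp A t *ᵥ u) 1 with hg
  -- g satisfies g' = Atg g componentwise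
  have hgder : ∀ (t : ℝ) (i : Fin (n + 1)),
      HasDerivAt (fun t => g t i) ((Atg *ᵥ g t) i) t := by
    intro t i
    refine Fin.lastCases ?_ ?_ i
    · have hfun : (fun t => g t (Fin.last n)) = fun _ => (1 : ℝ) := by
        funext s; simp [hg]
      have hval : (Atg *ᵥ g t) (Fin.last n) = 0 := by
        simp [Matrix.mulVec, dotProduct, aug_last, hAtg]
      rw [hfun, hval]
      exact hasDerivAt_const t 1
    · intro i'
      have hfun : (fun t => g t i'.castSucc)
          = fun t => ∑ j, (∫ s in (0:ℝ)..t, mexp (s • A) i' j) * u j := by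
        funext s
        simp [hg, Matrix.mulVec, dotProduct, intExp]
      have hterm : ∀ j : Fin n, HasDerivAt
          (fun t => (∫ s in (0:ℝ)..t, mexp (s • A) i' j) * u j)
          (mexp (t • A) i' j * u j) t :=
        fun j => (((cont_mexp_entry A i' j).integral_hasStrictDerivAt 0 t).hasDerivAt).mul_const _
      have hsum := HasDerivAt.fun_sum (u := (Finset.univ : Finset (Fin n))) (fun j _ => hterm j)
      have hval : (Atg *ᵥ g t) i'.castSucc = ∑ j, mexp (t • A) i' j * u j := by
        have expand : (Atg *ᵥ g t) i'.castSucc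
            = ∑ j : Fin n, A i' j * (intExp A t *ᵥ u) j + u i' := by
          simp only [Matrix.mulVec, dotProduct]
          rw [Fin.sum_univ_castSucc]
          simp [hAtg, hg, aug_castSucc_castSucc, aug_castSucc_last,
            Matrix.mulVec, dotProduct]
        have : ∑ j : Fin n, A i' j * (intExp A t *ᵥ u) j + u i'
            = ((A * intExp A t + 1) *ᵥ u) i' := by
          rw [Matrix.add_mulVec, Matrix.one_mulVec, ← Matrix.mulVec_mulVec]
          simp only [Pi.add_apply, add_left_cancel_iff, Matrix.mulVec, dotProduct,
            Matrix.mul_apply, Finset.mul_sum, Finset.sum_mul, mul_assoc]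
        rw [expand, this, mul_intExp_add_one]
        simp [Matrix.mulVec, dotProduct]
      rw [hfun, hval]
      exact hsum
  -- φ i t := (exp(-tAtg) g t) i has zero derivative
  have hφ : ∀ (i : Fin (n + 1)) (t : ℝ),
      HasDerivAt (fun t => (mexp (t • -Atg) *ᵥ g t) i) 0 t := by
    intro i t
    have hfun : (fun t => (mexp (t • -Atg) *ᵥ g t) i)
        = fun t => ∑ j, mexp (t • -Atg) i j * g t j := by
      funext s; simp [Matrix.mulVec, dotProduct]
    have hterm : ∀ j : Fin (n + 1), HasDerivAt
        (fun t => mexp (t • -Atg) i j * g t j)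
        ((mexp (t • -Atg) * -Atg) i j * g t j + mexp (t • -Atg) i j * (Atg *ᵥ g t) j) t :=
      fun j => (hasDerivAt_mexp_entry (-Atg) i j t).mul (hgder t j)
    have hsum := HasDerivAt.fun_sum (u := (Finset.univ : Finset (Fin (n+1)))) (fun j _ => hterm j)
    have hval : ∑ j, ((mexp (t • -Atg) * -Atg) i j * g t j
          + mexp (t • -Atg) i j * (Atg *ᵥ g t) j) = 0 := by
      rw [Finset.sum_add_distrib]
      have h1 : ∑ j, (mexp (t • -Atg) * -Atg) i j * g t j
          = ((mexp (t • -Atg) * -Atg) *ᵥ g t) i := by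
        simp [Matrix.mulVec, dotProduct]
      have h2 : ∑ j, mexp (t • -Atg) i j * (Atg *ᵥ g t) j
          = (mexp (t • -Atg) *ᵥ (Atg *ᵥ g t)) i := by
        simp [Matrix.mulVec, dotProduct]
      rw [h1, h2, ← Matrix.mulVec_mulVec]
      simp [Matrix.neg_mulVec, Matrix.mulVec_neg]
    rw [hfun]
    rw [← hval]
    exact hsum
  -- hence it is constant, equal to its value at 0
  have hconst : ∀ (i : Fin (n + 1)),
      (mexp (t • -Atg) *ᵥ g t) i = (Pi.single (Fin.last n) 1 : Fin (n+1) → ℝ) i := by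
    intro i
    have := is_const_of_deriv_eq_zero (f := fun t => (mexp (t • -Atg) *ᵥ g t) i)
      (fun s => (hφ i s).differentiableAt) (fun s => (hφ i s).deriv) t 0
    rw [this]
    have hint0 : intExp A 0 = 0 := by
      ext a b; simp [intExp]
    have hg0 : g 0 = Pi.single (Fin.last n) 1 := by
      funext k
      refine Fin.lastCases ?_ ?_ k
      · simp [hg]
      · intro k'
        simp [hg, hint0, Pi.single_eq_of_ne (Fin.castSucc_lt_last k').ne]
    rw [zero_smul, mexp_zero, Matrix.one_mulVec, hg0]
  have hconst' : mexp (t • -Atg) *ᵥ g t = Pi.single (Fin.last n) 1 := funext hconst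
  -- multiply by exp(tAtg)
  calc mexp (t • Atg) *ᵥ Pi.single (Fin.last n) 1
      = mexp (t • Atg) *ᵥ (mexp (t • -Atg) *ᵥ g t) := by rw [hconst']
    _ = (mexp (t • Atg) * mexp (-(t • Atg))) *ᵥ g t := by
        rw [Matrix.mulVec_mulVec, smul_neg]
    _ = g t := by rw [mexp_mul_mexp_neg, Matrix.one_mulVec]

lemma abs_le_enorm {m : ℕ} (x : Fin m → ℝ) (i : Fin m) : |x i| ≤ enorm2 x := by
  unfold enorm2
  rw [EuclideanSpace.norm_eq]
  have h1 : |x i| = Real.sqrt (|x i| ^ 2) := (Real.sqrt_sq_eq_abs _).symm.trans (by rw [sq_abs])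
  rw [h1]
  apply Real.sqrt_le_sqrt
  have := Finset.single_le_sum (f := fun j => ‖x j‖ ^ 2)
    (fun j _ => sq_nonneg _) (Finset.mem_univ i)
  simpa [Real.norm_eq_abs, sq_abs] using this

/-- Krylov error of the constant input solution: if the Krylov
approximation of `exp(Ã δ) x̃₀` has Euclidean error at most `ε̃ δ`, then the
constant-input particular solution `∫_0^δ exp(A s) ds · u` is componentwise within
`ε̃ δ` of `P Ṽ exp(H̃ δ) e₁`. -/
theorem stmt12 {n ξ : ℕ} [NeZero ξ]
    (A : Matrix (Fin n) (Fin n) ℝ) (u : Fin n → ℝ) (δ : ℝ) (hδ : 0 ≤ δ)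
    (Vt : Matrix (Fin (n + 1)) (Fin ξ) ℝ) (Ht : Matrix (Fin ξ) (Fin ξ) ℝ)
    (εt : ℝ) (hεt : 0 ≤ εt)
    (hbound : enorm2 (mexp (δ • aug A u) *ᵥ Pi.single (Fin.last n) 1
          - Vt *ᵥ (mexp (δ • Ht) *ᵥ e1)) ≤ εt * δ) :
    ∀ i : Fin n,
      |(intExp A δ *ᵥ u - proj (Vt *ᵥ (mexp (δ • Ht) *ᵥ e1))) i| ≤ εt * δ := by
  intro i
  set v := mexp (δ • aug A u) *ᵥ Pi.single (Fin.last n) 1 - Vt *ᵥ (mexp (δ • Ht) *ᵥ e1) with hv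
  have hcomp : (intExp A δ *ᵥ u - proj (Vt *ᵥ (mexp (δ • Ht) *ᵥ e1))) i = v i.castSucc := by
    simp only [hv, Pi.sub_apply, proj, key A u δ, Fin.snoc_castSucc]
  rw [hcomp]
  exact le_trans (abs_le_enorm v i.castSucc) hbound
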